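/- Let n, p ∈ ℕ, X̃ ∈ ℝ^{n×p}, Ỹ ∈ ℝ^n, λ₁ ≥ 0, λ₂ > 0, and let β̂ ∈ ℝ^p be a global minimizer of the Elastic Net objective L(β) = Σ_{i=1}^n (Ỹ_i − Σ_{j=1}^p β_j X̃_{ij})² + λ₂ Σ_{j=1}^p β_j² + λ₁ Σ_{j=1}^p |β_j|. Fix indices k, l with β̂_k · β̂_l > 0. Then, with r̂_i = Ỹ_i − Σ_{j=1}^p β̂_j X̃_{ij}, one has |β̂_k − β̂_l| ≤ (1/λ₂) Σ_{i=1}^n |X̃_{ik} − X̃_{il}| · |r̂_i|. -/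

import Mathlib

open Finset

/-- The Elastic Net objective
`L(β) = ∑ᵢ (Ỹᵢ − ∑ⱼ βⱼ X̃ᵢⱼ)² + λ₂ ∑ⱼ βⱼ² + λ₁ ∑ⱼ |βⱼ|`. -/
noncomputable def enetObj {n p : ℕ} (Xt : Fin n → Fin p → ℝ) (Yt : Fin n → ℝ)
    (lam1 lam2 : ℝ) (β : Fin p → ℝ) : ℝ :=
  ∑ i, (Yt i - ∑ j, β j * Xt i j) ^ 2 + lam2 * ∑ j, (β j) ^ 2 + lam1 * ∑ j, |β j|

lemma quad_B_zero (A B ε : ℝ) (hA : 0 < A) (hε : 0 < ε)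
    (h : ∀ t : ℝ, |t| ≤ ε → 0 ≤ A * t ^ 2 + B * t) : B = 0 := by
  set δ : ℝ := min (1 / (2 * A)) (ε / (|B| + 1)) with hδdef
  have hB1 : 0 < |B| + 1 := by positivity
  have hδ1 : δ ≤ 1 / (2 * A) := min_le_left _ _
  have hδ2 : δ ≤ ε / (|B| + 1) := min_le_right _ _
  have hδ0 : 0 < δ := lt_min (by positivity) (by positivity)
  have ht : |(-B * δ)| ≤ ε := by
    rw [abs_mul, abs_neg, abs_of_pos hδ0]
    calc |B| * δ ≤ |B| * (ε / (|B| + 1)) :=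
          mul_le_mul_of_nonneg_left hδ2 (abs_nonneg B)
      _ = ε * (|B| / (|B| + 1)) := by ring
      _ ≤ ε * 1 := by
          apply mul_le_mul_of_nonneg_left _ hε.le
          rw [div_le_one hB1]; linarith
      _ = ε := mul_one ε
  have h2 := h (-B * δ) ht
  have heq : A * (-B * δ) ^ 2 + B * (-B * δ) = B ^ 2 * δ * (A * δ - 1) := by ring
  rw [heq] at h2
  have hAδ : A * δ ≤ 1 / 2 := by
    have h3 := mul_le_mul_of_nonneg_left hδ1 hA.le
    rw [mul_one_div] at h3
    have : A / (2 * A) = 1 / 2 := by field_simp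
    linarith
  have hBδ : 0 ≤ B ^ 2 * δ := mul_nonneg (sq_nonneg B) hδ0.le
  have hB2 : B ^ 2 * δ = 0 := by nlinarith
  have : B ^ 2 = 0 := by
    rcases mul_eq_zero.mp hB2 with h | h
    · exact h
    · exact absurd h hδ0.ne'
  exact pow_eq_zero_iff (by norm_num) |>.mp this

theorem elasticNet_coeff_difference_bound {n p : ℕ}
    (Xt : Fin n → Fin p → ℝ) (Yt : Fin n → ℝ)
    (lam1 lam2 : ℝ) (hlam1 : 0 ≤ lam1) (hlam2 : 0 < lam2)
    (βh : Fin p → ℝ)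
    (hmin : ∀ β, enetObj Xt Yt lam1 lam2 βh ≤ enetObj Xt Yt lam1 lam2 β)
    (k l : Fin p) (hsign : βh k * βh l > 0) :
    |βh k - βh l| ≤
      (1 / lam2) * ∑ i, |Xt i k - Xt i l| * |Yt i - ∑ j, βh j * Xt i j| := by
  by_cases hkl : k = l
  · subst hkl; simp
  -- notation
  set rh : Fin n → ℝ := fun i => Yt i - ∑ j, βh j * Xt i j with hrh
  set Δ : Fin n → ℝ := fun i => Xt i k - Xt i l with hΔ
  set S : ℝ := ∑ i, Δ i * rh i with hS
  -- sign analysis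
  have hε : 0 < min |βh k| |βh l| := by
    rcases mul_pos_iff.mp hsign with ⟨h1, h2⟩ | ⟨h1, h2⟩ <;>
      exact lt_min (abs_pos.mpr (by linarith)) (abs_pos.mpr (by linarith))
  set ε := min |βh k| |βh l| with hεdef
  set A : ℝ := (∑ i, Δ i ^ 2) + 2 * lam2 with hA
  set B : ℝ := 2 * lam2 * (βh k - βh l) - 2 * S with hB
  have hApos : 0 < A := by
    have : 0 ≤ ∑ i, Δ i ^ 2 := Finset.sum_nonneg fun i _ => sq_nonneg _
    rw [hA]; linarith
  obtain ⟨s, hs1, hsk, hsl⟩ :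
      ∃ s : ℝ, (s = 1 ∨ s = -1) ∧ |βh k| = s * βh k ∧ |βh l| = s * βh l := by
    rcases mul_pos_iff.mp hsign with ⟨h1, h2⟩ | ⟨h1, h2⟩
    · exact ⟨1, Or.inl rfl, by rw [abs_of_pos h1]; ring, by rw [abs_of_pos h2]; ring⟩
    · exact ⟨-1, Or.inr rfl, by rw [abs_of_neg h1]; ring, by rw [abs_of_neg h2]; ring⟩
  have hq : ∀ t : ℝ, |t| ≤ ε → 0 ≤ A * t ^ 2 + B * t := by
    intro t ht
    set d : Fin p → ℝ := fun j => (if j = k then (1:ℝ) else 0) - (if j = l then 1 else 0)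
      with hd
    set βt : Fin p → ℝ := fun j => βh j + t * d j with hβt
    have hdk : d k = 1 := by simp [hd, hkl]
    have hlk : l ≠ k := fun h => hkl h.symm
    have hdl : d l = -1 := by simp [hd, hlk]
    have htk : |t| ≤ |βh k| := le_trans ht (min_le_left _ _)
    have htl : |t| ≤ |βh l| := le_trans ht (min_le_right _ _)
    -- h1 : linear term in predictions
    have h1 : ∀ i, ∑ j, βt j * Xt i j = (∑ j, βh j * Xt i j) + t * Δ i := by
      intro i
      have : ∀ j, βt j * Xt i j = βh j * Xt i j
          + t * ((if j = k then Xt i j else 0) - (if j = l then Xt i j else 0)) := by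
        intro j
        simp only [hβt, hd]
        split <;> split <;> ring
      rw [Finset.sum_congr rfl fun j _ => this j, Finset.sum_add_distrib, ← Finset.mul_sum,
        Finset.sum_sub_distrib, Finset.sum_ite_eq' Finset.univ k, Finset.sum_ite_eq' Finset.univ l]
      simp [hΔ]
    -- h2 : squared term
    have h2 : ∑ j, (βt j) ^ 2
        = (∑ j, (βh j) ^ 2) + 2 * t * (βh k - βh l) + 2 * t ^ 2 := by
      have e : ∀ j, (βt j) ^ 2 = (βh j) ^ 2 + 2 * t * (βh j * d j) + t ^ 2 * (d j) ^ 2 := by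
        intro j; simp only [hβt]; ring
      have ed : ∑ j, βh j * d j = βh k - βh l := by
        have : ∀ j, βh j * d j
            = (if j = k then βh j else 0) - (if j = l then βh j else 0) := by
          intro j; simp only [hd]; split <;> split <;> ring
        rw [Finset.sum_congr rfl fun j _ => this j, Finset.sum_sub_distrib,
          Finset.sum_ite_eq' Finset.univ k, Finset.sum_ite_eq' Finset.univ l]
        simp
      have ed2 : ∑ j, (d j) ^ 2 = 2 := by
        have : ∀ j, (d j) ^ 2
            = (if j = k then (1:ℝ) else 0) + (if j = l then 1 else 0) := by
          intro j
          by_cases h1 : j = k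
          · subst h1; simp [hd, hkl]
          · by_cases h2 : j = l
            · subst h2; simp [hd, hlk]
            · simp [hd, h1, h2]
        rw [Finset.sum_congr rfl fun j _ => this j, Finset.sum_add_distrib,
          Finset.sum_ite_eq' Finset.univ k, Finset.sum_ite_eq' Finset.univ l]
        norm_num
      rw [Finset.sum_congr rfl fun j _ => e j, Finset.sum_add_distrib,
        Finset.sum_add_distrib, ← Finset.mul_sum, ← Finset.mul_sum, ed, ed2]
      ring
    -- h3 : absolute value term unchanged
    have h3 : ∑ j, |βt j| = ∑ j, |βh j| := by
      have e : ∀ j, |βt j| = |βh j| + (s * t) * d j := by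
        intro j
        by_cases h1 : j = k
        · subst h1
          rw [hβt]
          simp only [hdk, mul_one]
          rcases hs1 with h | h <;> subst h
          · have hk0 : 0 ≤ βh j := by
              have := abs_nonneg (βh j); rw [hsk] at this; linarith
            rw [abs_of_nonneg (by
              have := neg_abs_le t; linarith [hsk ▸ htk, abs_le.mp htk |>.1])]
            rw [hsk]; ring
          · have : βh j + t ≤ 0 := by
              have h2 := (abs_le.mp htk).2
              rw [hsk] at h2; linarith
            rw [abs_of_nonpos this, hsk]; ring
        · by_cases h2 : j = l
          · subst h2
            rw [hβt]
            simp only [hdl, mul_neg_one]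
            rcases hs1 with h | h <;> subst h
            · have : 0 ≤ βh j - t := by
                have h2 := (abs_le.mp htl).2
                rw [hsl] at h2; linarith
              rw [show βh j + -t = βh j - t by ring, abs_of_nonneg this, hsl]; ring
            · have : βh j - t ≤ 0 := by
                have h2 := (abs_le.mp htl).1
                rw [hsl] at h2; linarith
              rw [show βh j + -t = βh j - t by ring, abs_of_nonpos this, hsl]; ring
          · have : d j = 0 := by simp [hd, h1, h2]
            rw [hβt]; simp [this]
      have edsum : ∑ j, d j = 0 := by
        have : ∀ j, d j = (if j = k then (1:ℝ) else 0) - (if j = l then 1 else 0) := fun j => rfl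
        rw [Finset.sum_congr rfl fun j _ => this j, Finset.sum_sub_distrib,
          Finset.sum_ite_eq' Finset.univ k, Finset.sum_ite_eq' Finset.univ l]
        simp
      rw [Finset.sum_congr rfl fun j _ => e j, Finset.sum_add_distrib, ← Finset.mul_sum,
        edsum]
      ring
    -- plug into hmin
    have hsq : ∑ i, (Yt i - ∑ j, βt j * Xt i j) ^ 2
        = (∑ i, (Yt i - ∑ j, βh j * Xt i j) ^ 2) - 2 * t * S + t ^ 2 * ∑ i, Δ i ^ 2 := by
      have e : ∀ i, (Yt i - ∑ j, βt j * Xt i j) ^ 2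
          = (Yt i - ∑ j, βh j * Xt i j) ^ 2 - 2 * t * (Δ i * rh i) + t ^ 2 * Δ i ^ 2 := by
        intro i
        rw [h1 i]
        simp only [hrh]
        ring
      rw [Finset.sum_congr rfl fun i _ => e i, Finset.sum_add_distrib,
        Finset.sum_sub_distrib, ← Finset.mul_sum, ← Finset.mul_sum, hS]
    have hm := hmin βt
    unfold enetObj at hm
    rw [hsq, h2, h3] at hm
    rw [hA, hB]
    nlinarith [hm]
  have hB0 : B = 0 := quad_B_zero A B ε hApos hε hq
  have key : βh k - βh l = S / lam2 := by
    rw [hB] at hB0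
    field_simp
    linarith
  rw [key, abs_div, abs_of_pos hlam2, div_eq_mul_inv, one_div, mul_comm]
  apply mul_le_mul_of_nonneg_left _ (inv_nonneg.mpr hlam2.le)
  calc |S| ≤ ∑ i, |Δ i * rh i| := by rw [hS]; exact Finset.abs_sum_le_sum_abs _ _
    _ = ∑ i, |Xt i k - Xt i l| * |Yt i - ∑ j, βh j * Xt i j| := by
        apply Finset.sum_congr rfl
        intro i _
        rw [abs_mul]
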